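/- Let G be a finite abelian group, let A ⊆ G be a Sidon set, and set δ = √|G| − |A|. Then for all subsets B, B′ ⊆ G, the number N = |{(b,b′) ∈ B × B′ : b + b′ ∈ A}| satisfies |N − |A||B||B′|/|G|| ≤ (1 + max(0,δ)·|B|/|G|) · √(|B||B′|) · |G|^{1/4}. -/

import Mathlib

open Finset

lemma aux_shift {G : Type*} [AddCommGroup G] [Fintype G] [DecidableEq G]
    (A : Finset G) (c : G) :
    (Finset.univ.filter (fun x => c + x ∈ A)).card = A.card := by
  have : Finset.univ.filter (fun x => c + x ∈ A) = A.image (fun a => a - c) := by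
    ext x
    simp only [mem_filter, mem_univ, true_and, Finset.mem_image]
    constructor
    · intro h; exact ⟨c + x, h, by abel⟩
    · rintro ⟨a, ha, rfl⟩; simpa using ha
  rw [this, Finset.card_image_of_injective _ sub_left_injective]

lemma aux_count {G : Type*} [AddCommGroup G] [Fintype G] [DecidableEq G]
    (A B B' : Finset G) :
    ((B ×ˢ B').filter (fun x => x.1 + x.2 ∈ A)).card
      = ∑ y ∈ B', (B.filter (fun b => b + y ∈ A)).card := by
  simp only [Finset.card_filter]
  rw [Finset.sum_product]
  rw [Finset.sum_comm]

lemma aux_total {G : Type*} [AddCommGroup G] [Fintype G] [DecidableEq G]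
    (A B : Finset G) :
    ∑ x : G, (B.filter (fun b => b + x ∈ A)).card = A.card * B.card := by
  simp only [Finset.card_filter]
  rw [Finset.sum_comm]
  have : ∀ b ∈ B, (∑ x : G, if b + x ∈ A then 1 else 0) = A.card := by
    intro b _
    rw [← Finset.card_filter]
    exact aux_shift A b
  rw [Finset.sum_congr rfl this, Finset.sum_const, smul_eq_mul, mul_comm]

lemma aux_sidon_pair {G : Type*} [AddCommGroup G] [Fintype G] [DecidableEq G]
    (A : Finset G)
    (hA : ∀ a ∈ A, ∀ b ∈ A, ∀ c ∈ A, ∀ d ∈ A,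
      a - b = c - d → a - b ≠ 0 → a = c ∧ b = d)
    {b1 b2 : G} (hne : b1 ≠ b2) :
    (Finset.univ.filter (fun x => b1 + x ∈ A ∧ b2 + x ∈ A)).card ≤ 1 := by
  apply Finset.card_le_one.2
  intro x hx y hy
  simp only [mem_filter, mem_univ, true_and] at hx hy
  have hd : (b1 + x) - (b2 + x) = (b1 + y) - (b2 + y) := by abel
  have hnz : (b1 + x) - (b2 + x) ≠ 0 := by
    simpa [sub_ne_zero, add_left_cancel_iff] using sub_ne_zero.mpr hne
  have := (hA _ hx.1 _ hx.2 _ hy.1 _ hy.2 hd hnz).1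
  exact add_left_cancel this

lemma aux_sq {G : Type*} [AddCommGroup G] [Fintype G] [DecidableEq G]
    (A : Finset G)
    (hA : ∀ a ∈ A, ∀ b ∈ A, ∀ c ∈ A, ∀ d ∈ A,
      a - b = c - d → a - b ≠ 0 → a = c ∧ b = d)
    (B : Finset G) :
    ∑ x : G, ((B.filter (fun b => b + x ∈ A)).card)^2
      ≤ A.card * B.card + B.card * (B.card - 1) := by
  have key : ∀ x : G, ((B.filter (fun b => b + x ∈ A)).card)^2
      = ∑ b1 ∈ B, ∑ b2 ∈ B, (if b1 + x ∈ A ∧ b2 + x ∈ A then 1 else 0) := by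
    intro x
    rw [Finset.card_filter, sq, Finset.sum_mul_sum]
    congr 1; ext b1; congr 1; ext b2
    by_cases h1 : b1 + x ∈ A <;> by_cases h2 : b2 + x ∈ A <;> simp [h1, h2]
  calc ∑ x : G, ((B.filter (fun b => b + x ∈ A)).card)^2
      = ∑ b1 ∈ B, ∑ b2 ∈ B,
          (Finset.univ.filter (fun x => b1 + x ∈ A ∧ b2 + x ∈ A)).card := by
        simp only [key]
        rw [Finset.sum_comm]
        refine Finset.sum_congr rfl fun b1 _ => ?_
        rw [Finset.sum_comm]
        exact Finset.sum_congr rfl fun b2 _ => (Finset.card_filter _ _).symm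
    _ ≤ ∑ _b1 ∈ B, (A.card + (B.card - 1)) := by
        apply Finset.sum_le_sum
        intro b1 hb1
        rw [← Finset.add_sum_erase B _ hb1]
        refine Nat.add_le_add (le_of_eq ?_) ?_
        · rw [show Finset.univ.filter (fun x => b1 + x ∈ A ∧ b1 + x ∈ A)
              = Finset.univ.filter (fun x => b1 + x ∈ A) from by ext x; simp,
            aux_shift]
        · calc ∑ b2 ∈ B.erase b1,
                (Finset.univ.filter (fun x => b1 + x ∈ A ∧ b2 + x ∈ A)).card
              ≤ ∑ _b2 ∈ B.erase b1, 1 := by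
                apply Finset.sum_le_sum
                intro b2 hb2
                exact aux_sidon_pair A hA (Finset.ne_of_mem_erase hb2).symm
            _ = B.card - 1 := by rw [Finset.sum_const, smul_eq_mul, mul_one,
                Finset.card_erase_of_mem hb1]
    _ = A.card * B.card + B.card * (B.card - 1) := by
        rw [Finset.sum_const, smul_eq_mul, Nat.mul_add, Nat.mul_comm B.card A.card]

lemma aux_size {G : Type*} [AddCommGroup G] [Fintype G] [DecidableEq G]
    (A : Finset G)
    (hA : ∀ a ∈ A, ∀ b ∈ A, ∀ c ∈ A, ∀ d ∈ A,
      a - b = c - d → a - b ≠ 0 → a = c ∧ b = d) :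
    A.card * A.card + 1 ≤ Fintype.card G + A.card := by
  have h3 : ((A ×ˢ A).filter fun p => p.1 ≠ p.2).card
      + ((A ×ˢ A).filter fun p => ¬ p.1 ≠ p.2).card = A.card * A.card := by
    rw [Finset.card_filter_add_card_filter_not, Finset.card_product]
  have h1 : ((A ×ˢ A).filter fun p => p.1 ≠ p.2).card ≤ Fintype.card G - 1 := by
    have := Finset.card_le_card_of_injOn (s := (A ×ˢ A).filter fun p => p.1 ≠ p.2)
      (f := fun p : G × G => p.1 - p.2) (t := Finset.univ.erase 0) ?_ ?_
    · simpa [Finset.card_erase_of_mem] using this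
    · intro p hp
      simp only [Finset.mem_coe, mem_filter, Finset.mem_product] at hp
      simp [sub_ne_zero.mpr hp.2]
    · intro p hp q hq heq
      simp only [Finset.mem_coe, Finset.mem_filter, Finset.mem_product] at hp hq
      have := hA p.1 hp.1.1 p.2 hp.1.2 q.1 hq.1.1 q.2 hq.1.2 heq
        (sub_ne_zero.mpr hp.2)
      exact Prod.ext this.1 this.2
  have h2 : ((A ×ˢ A).filter fun p => ¬ p.1 ≠ p.2).card ≤ A.card := by
    apply Finset.card_le_card_of_injOn (f := fun p : G × G => p.1)
    · intro p hp
      simp only [Finset.mem_coe, Finset.mem_filter, Finset.mem_product] at hp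
      exact hp.1.1
    · intro p hp q hq heq
      simp only [Finset.mem_coe, Finset.mem_filter, not_not] at hp hq
      have heq' : p.1 = q.1 := heq
      exact Prod.ext heq' (by rw [← hp.2, ← hq.2, heq'])
  have h4 : 1 ≤ Fintype.card G := Fintype.card_pos
  omega

lemma aux_ineq (a b s : ℝ) (ha : 0 ≤ a) (hb : 0 ≤ b) (hs : 1 ≤ s)
    (hsize : a * a + 1 ≤ s * s + a) :
    a*b + b^2 - b - a^2*b^2/(s*s) ≤ (1 + max 0 (s - a) * b / (s*s))^2 * b * s := by
  have hs0 : (0:ℝ) < s := lt_of_lt_of_le one_pos hs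
  have h3 : (0:ℝ) < s*s*s := by positivity
  have hL : a*b + b^2 - b - a^2*b^2/(s*s)
      = ((a*b + b^2 - b)*(s*s*s) - a^2*b^2*s)/(s*s*s) := by
    field_simp
  have hR : (1 + max 0 (s - a) * b / (s*s))^2 * b * s
      = ((s*s + max 0 (s - a) * b)^2 * b)/(s*s*s) := by
    field_simp
  rw [hL, hR, div_le_div_iff₀ h3 h3]
  rcases le_or_gt a s with hcase | hcase
  · rw [max_eq_right (by linarith)]
    have t1 : 0 ≤ b*(s*s*s)*(s - a + 1) := by
      apply mul_nonneg (by positivity); linarith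
    have t2 : 0 ≤ (s-a)*((s-a)*(b*(b*s))) := by
      have : 0 ≤ s - a := by linarith
      positivity
    have t3 : 0 ≤ (s-a)*((s-a)*(b*(b*b))) := by
      have : 0 ≤ s - a := by linarith
      positivity
    nlinarith [t1, t2, t3, mul_pos h3 h3]
  · rw [max_eq_left (by linarith)]
    have haux : a ≤ s + 1 := by nlinarith
    have t1 : 0 ≤ b*(s*s)*(s + 1 - a) := by
      have : 0 ≤ s + 1 - a := by linarith
      positivity
    have t2 : 0 ≤ b*b*(a*a - s*s) := by
      apply mul_nonneg (by positivity)
      have : 0 ≤ (a - s) * (a + s) := mul_nonneg (by linarith) (by linarith)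
      nlinarith [this]
    nlinarith [t1, t2, mul_pos h3 h3]

/-- Let `G` be a finite abelian group, `A ⊆ G` a Sidon set, and
`δ = √|G| − |A|`. Then for all `B, B' ⊆ G`, the number
`N = |{(b,b') ∈ B × B' : b + b' ∈ A}|` satisfies
`|N − |A||B||B'|/|G|| ≤ (1 + max(0,δ)·|B|/|G|) · √(|B||B'|) · |G|^{1/4}`. -/
theorem sidon_count_pairs {G : Type*} [AddCommGroup G] [Fintype G] [DecidableEq G]
    (A : Finset G)
    (hA : ∀ a ∈ A, ∀ b ∈ A, ∀ c ∈ A, ∀ d ∈ A,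
      a - b = c - d → a - b ≠ 0 → a = c ∧ b = d)
    (B B' : Finset G) :
    |((((B ×ˢ B').filter (fun x => x.1 + x.2 ∈ A)).card : ℝ)
        - (A.card : ℝ) * B.card * B'.card / (Fintype.card G : ℝ))|
      ≤ (1 + max 0 (Real.sqrt (Fintype.card G) - (A.card : ℝ)) * (B.card : ℝ)
            / (Fintype.card G : ℝ))
        * Real.sqrt ((B.card : ℝ) * (B'.card : ℝ))
        * (Fintype.card G : ℝ) ^ ((1 : ℝ) / 4) := by
  classical
  set f : G → ℕ := fun x => (B.filter (fun b => b + x ∈ A)).card with hf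
  set a : ℝ := (A.card : ℝ) with hadef
  set b : ℝ := (B.card : ℝ) with hbdef
  set b' : ℝ := (B'.card : ℝ) with hb'def
  set nR : ℝ := (Fintype.card G : ℝ) with hnR
  have hn1 : (1:ℝ) ≤ nR := by
    have : 1 ≤ Fintype.card G := Fintype.card_pos
    rw [hnR]; exact_mod_cast this
  have hn0 : (0:ℝ) < nR := by linarith
  set s : ℝ := Real.sqrt nR with hsdef
  have hss : s * s = nR := Real.mul_self_sqrt (by linarith)
  have hs1 : (1:ℝ) ≤ s := by
    rw [hsdef, show (1:ℝ) = Real.sqrt 1 by simp]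
    exact Real.sqrt_le_sqrt hn1
  have hs0 : (0:ℝ) < s := by linarith
  have ha0 : (0:ℝ) ≤ a := Nat.cast_nonneg _
  have hb0 : (0:ℝ) ≤ b := Nat.cast_nonneg _
  have hb'0 : (0:ℝ) ≤ b' := Nat.cast_nonneg _
  set μ : ℝ := a * b / nR with hμ
  -- basic counting facts
  have h1 : ((((B ×ˢ B').filter (fun x => x.1 + x.2 ∈ A)).card : ℝ))
      = ∑ y ∈ B', (f y : ℝ) := by
    rw [aux_count A B B']
    push_cast
    rfl
  have h2 : ∑ x : G, (f x : ℝ) = a * b := by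
    have := aux_total A B
    rw [hadef, hbdef]
    exact_mod_cast this
  have h3 : ∑ x : G, ((f x : ℝ))^2 ≤ a*b + b^2 - b := by
    have h3n : (∑ x : G, (f x)^2) ≤ A.card * B.card + B.card * (B.card - 1) :=
      aux_sq A hA B
    have h3n' : (∑ x : G, (f x)^2) + B.card ≤ A.card * B.card + B.card * B.card := by
      rcases Nat.eq_zero_or_pos B.card with h0 | hpos
      · have hz : ∀ x : G, f x = 0 := by
          intro x
          have : B = ∅ := Finset.card_eq_zero.mp h0
          simp [hf, this]
        simp [hz, h0]
      · calc (∑ x : G, (f x)^2) + B.card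
            ≤ A.card * B.card + B.card * (B.card - 1) + B.card := by omega
          _ = A.card * B.card + B.card * ((B.card - 1) + 1) := by ring
          _ = A.card * B.card + B.card * B.card := by
              rw [Nat.sub_add_cancel hpos]
    have : ((∑ x : G, (f x)^2 : ℕ) : ℝ) + b ≤ a * b + b * b := by
      rw [hadef, hbdef]; exact_mod_cast h3n'
    push_cast at this
    nlinarith [this]
  have h4 : a * a + 1 ≤ s * s + a := by
    rw [hss, hadef, hnR]
    have := aux_size A hA
    exact_mod_cast this
  -- second moment of deviation
  set S : ℝ := ∑ x : G, ((f x : ℝ) - μ)^2 with hSdef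
  have hS : S = (∑ x : G, ((f x : ℝ))^2) - (a*b)^2/nR := by
    have expand : ∀ x : G, ((f x : ℝ) - μ)^2
        = (f x : ℝ)^2 - 2*μ*(f x : ℝ) + μ^2 := fun x => by ring
    rw [hSdef, Finset.sum_congr rfl (fun x _ => expand x),
      Finset.sum_add_distrib, Finset.sum_sub_distrib, ← Finset.mul_sum, h2,
      Finset.sum_const, Finset.card_univ, nsmul_eq_mul]
    rw [hμ]
    field_simp
    ring
  have key : S ≤ (1 + max 0 (s - a) * b / nR)^2 * b * s := by
    have := aux_ineq a b s ha0 hb0 hs1 h4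
    rw [hss] at this
    have hS' : S ≤ a*b + b^2 - b - a^2*b^2/nR := by
      rw [hS]
      have : (a*b)^2/nR = a^2*b^2/nR := by ring_nf
      linarith [h3, this.le, this.ge]
    calc S ≤ a*b + b^2 - b - a^2*b^2/nR := hS'
      _ ≤ (1 + max 0 (s - a) * b / nR)^2 * b * s := this
  -- Cauchy–Schwarz
  have cauchy : (∑ y ∈ B', ((f y : ℝ) - μ))^2 ≤ b' * S := by
    have c1 := Finset.sum_mul_sq_le_sq_mul_sq B' (fun _ => (1:ℝ))
      (fun y => (f y : ℝ) - μ)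
    simp only [one_mul, one_pow, Finset.sum_const, nsmul_eq_mul, mul_one] at c1
    have c2 : ∑ y ∈ B', ((f y : ℝ) - μ)^2 ≤ S := by
      apply Finset.sum_le_sum_of_subset_of_nonneg (Finset.subset_univ B')
      intro i _ _
      positivity
    calc (∑ y ∈ B', ((f y : ℝ) - μ))^2
        ≤ (B'.card : ℝ) * ∑ y ∈ B', ((f y : ℝ) - μ)^2 := c1
      _ ≤ b' * S := by
          apply mul_le_mul_of_nonneg_left c2 hb'0
  -- identify the LHS
  have hX : ((((B ×ˢ B').filter (fun x => x.1 + x.2 ∈ A)).card : ℝ)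
      - a * b * b' / nR) = ∑ y ∈ B', ((f y : ℝ) - μ) := by
    rw [Finset.sum_sub_distrib, Finset.sum_const, nsmul_eq_mul, h1, hμ]
    ring
  set R : ℝ := 1 + max 0 (s - a) * b / nR with hR
  have hR0 : 0 ≤ R := by
    rw [hR]
    have h5 : 0 ≤ max 0 (s - a) := le_max_left _ _
    have h6 : 0 ≤ max 0 (s - a) * b / nR := by positivity
    linarith
  have hq : ((nR) ^ ((1:ℝ)/4))^2 = s := by
    rw [hsdef, Real.sqrt_eq_rpow, ← Real.rpow_natCast (nR ^ ((1:ℝ)/4)) 2,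
      ← Real.rpow_mul (by linarith)]
    norm_num
  have hRHS0 : 0 ≤ R * Real.sqrt (b * b') * nR ^ ((1:ℝ)/4) := by
    apply mul_nonneg (mul_nonneg hR0 (Real.sqrt_nonneg _))
    positivity
  rw [hX]
  rw [← Real.sqrt_sq_eq_abs]
  calc Real.sqrt ((∑ y ∈ B', ((f y : ℝ) - μ))^2)
      ≤ Real.sqrt ((R * Real.sqrt (b * b') * nR ^ ((1:ℝ)/4))^2) := by
        apply Real.sqrt_le_sqrt
        have e1 : (R * Real.sqrt (b * b') * nR ^ ((1:ℝ)/4))^2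
            = R^2 * (b*b') * s := by
          have hbb : (0:ℝ) ≤ b * b' := mul_nonneg hb0 hb'0
          rw [mul_pow, mul_pow, Real.sq_sqrt hbb, hq]
        rw [e1]
        calc (∑ y ∈ B', ((f y : ℝ) - μ))^2 ≤ b' * S := cauchy
          _ ≤ b' * (R^2 * b * s) := mul_le_mul_of_nonneg_left key hb'0
          _ = R^2 * (b*b') * s := by ring
    _ = R * Real.sqrt (b * b') * nR ^ ((1:ℝ)/4) := Real.sqrt_sq hRHS0
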